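/- arXiv:1511.03069 — 2 statements merged into one kernel-verified Lean document; each statement's English description precedes it below -/
import Mathlib

section
/- For the diagram D_n (path 1,...,n-2 with two extra leaves n-1 and n both attached to vertex n-2), with n ≥ 4: the number of equivalence classes under Reeder's moves equals k+3 if n = 2k and k+2 if n = 2k+1. -/
/-- Reeder's move `T_i`. -/
def move {V : Type} [Fintype V] [DecidableEq V] (D : SimpleGraph V) [DecidableRel D.Adj]
    (i : V) (a : V → ZMod 2) : V → ZMod 2 :=
  fun j => if j = i then a i + ∑ k ∈ D.neighborFinset i, a k else a j

/-- One step of Reeder's game: apply some move. -/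
def reederStep {V : Type} [Fintype V] [DecidableEq V] (D : SimpleGraph V)
    [DecidableRel D.Adj] (a b : V → ZMod 2) : Prop :=
  ∃ i, b = move D i a

/-- The Dynkin diagram `D_n` (0-indexed): a path on vertices `0,…,n-3` together with two
extra leaves `n-2` and `n-1`, both attached to vertex `n-3`. -/
def DG (n : ℕ) : SimpleGraph (Fin n) where
  Adj i j := i ≠ j ∧
    (((i.val + 1 = j.val ∧ j.val + 3 ≤ n) ∨ (j.val + 1 = i.val ∧ i.val + 3 ≤ n)) ∨
     (i.val + 3 = n ∧ (j.val + 2 = n ∨ j.val + 1 = n)) ∨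
     (j.val + 3 = n ∧ (i.val + 2 = n ∨ i.val + 1 = n)))
  symm := by constructor; intro i j h; exact ⟨Ne.symm h.1, by tauto⟩
  loopless := by constructor; intro i h; exact h.1 rfl

instance (n : ℕ) : DecidableRel (DG n).Adj :=
  fun i j => inferInstanceAs (Decidable (_ ∧ _))

def av {n : ℕ} (a : Fin n → ZMod 2) : ℕ → ZMod 2 := fun m => if h : m < n then a ⟨m, h⟩ else 0

lemma nbr_sum_explicit {n : ℕ} (hn : 4 ≤ n) (a : Fin n → ZMod 2) (i : Fin n) :
    (∑ k ∈ (DG n).neighborFinset i, a k) =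
      (if i.val = 0 then av a 1
       else if i.val + 4 ≤ n then av a (i.val - 1) + av a (i.val + 1)
       else if i.val + 3 = n then av a (n-4) + av a (n-2) + av a (n-1)
       else av a (n-3)) := by
  have hNF : (DG n).neighborFinset i = Finset.univ.filter ((DG n).Adj i) := by
    ext j; simp [SimpleGraph.mem_neighborFinset]
  rw [hNF]
  rcases Nat.lt_or_ge i.val 1 with h0 | h1
  · have hi : i.val = 0 := by omega
    have hset : Finset.univ.filter ((DG n).Adj i) = {(⟨1, by omega⟩ : Fin n)} := by
      ext j
      simp only [Finset.mem_filter, Finset.mem_univ, true_and, Finset.mem_singleton,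
        DG, ne_eq, Fin.ext_iff]
      omega
    rw [hset, Finset.sum_singleton, if_pos hi]
    unfold av; rw [dif_pos (by omega)]
  · rcases Nat.lt_or_ge (i.val + 4) (n+1) with h2 | h2
    · have hset : Finset.univ.filter ((DG n).Adj i) =
          {(⟨i.val - 1, by omega⟩ : Fin n), (⟨i.val + 1, by omega⟩ : Fin n)} := by
        ext j
        simp only [Finset.mem_filter, Finset.mem_univ, true_and, Finset.mem_insert,
          Finset.mem_singleton, DG, ne_eq, Fin.ext_iff]
        omega
      rw [hset, Finset.sum_pair (by simp only [ne_eq, Fin.ext_iff]; omega)]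
      rw [if_neg (by omega), if_pos (by omega)]
      unfold av
      rw [dif_pos (by omega), dif_pos (by omega)]
    · rcases Nat.lt_or_ge i.val (n-2) with h3 | h3
      · have hi : i.val + 3 = n := by omega
        have hset : Finset.univ.filter ((DG n).Adj i) =
            {(⟨n-4, by omega⟩ : Fin n), (⟨n-2, by omega⟩ : Fin n), (⟨n-1, by omega⟩ : Fin n)} := by
          ext j
          simp only [Finset.mem_filter, Finset.mem_univ, true_and, Finset.mem_insert,
            Finset.mem_singleton, DG, ne_eq, Fin.ext_iff]
          omega
        rw [hset]
        rw [Finset.sum_insert (by simp only [Finset.mem_insert, Finset.mem_singleton, Fin.ext_iff]; omega),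
          Finset.sum_pair (by simp only [ne_eq, Fin.ext_iff]; omega)]
        rw [if_neg (by omega), if_neg (by omega), if_pos hi]
        simp only [av]
        rw [dif_pos (by omega), dif_pos (by omega), dif_pos (by omega)]
        ring
      · have hset : Finset.univ.filter ((DG n).Adj i) = {(⟨n-3, by omega⟩ : Fin n)} := by
          ext j
          simp only [Finset.mem_filter, Finset.mem_univ, true_and, Finset.mem_singleton,
            DG, ne_eq, Fin.ext_iff]
          omega
        rw [hset, Finset.sum_singleton]
        rw [if_neg (by omega), if_neg (by omega), if_neg (by omega)]
        unfold av; rw [dif_pos (by omega)]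

def nsum {n : ℕ} (a : Fin n → ZMod 2) (i : ℕ) : ZMod 2 :=
  if i = 0 then av a 1
  else if i + 4 ≤ n then av a (i - 1) + av a (i + 1)
  else if i + 3 = n then av a (n-4) + av a (n-2) + av a (n-1)
  else av a (n-3)


lemma nbr_sum {n : ℕ} (hn : 4 ≤ n) (a : Fin n → ZMod 2) (i : Fin n) :
    (∑ k ∈ (DG n).neighborFinset i, a k) = nsum a i.val := by
  rw [nbr_sum_explicit hn a i]; rfl

lemma av_move_ne {n : ℕ} (a : Fin n → ZMod 2) (i : Fin n) (k : ℕ) (h : k ≠ i.val) :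
    av (move (DG n) i a) k = av a k := by
  unfold av
  split
  · next hk =>
      show move (DG n) i a ⟨k, hk⟩ = a ⟨k, hk⟩
      unfold move
      rw [if_neg]
      intro heq
      exact h (congrArg Fin.val heq)
  · rfl

lemma av_move_eq {n : ℕ} (hn : 4 ≤ n) (a : Fin n → ZMod 2) (i : Fin n) :
    av (move (DG n) i a) i.val = av a i.val + nsum a i.val := by
  unfold av
  rw [dif_pos i.isLt, dif_pos i.isLt]
  show move (DG n) i a ⟨i.val, i.isLt⟩ = _
  unfold move
  rw [if_pos (by ext; rfl), nbr_sum hn]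

def yv (n : ℕ) (a : Fin n → ZMod 2) : ℕ → ZMod 2 := fun m =>
  if m = 0 then av a 0
  else if m + 3 ≤ n then av a (m-1) + av a m
  else if m + 2 = n then av a (n-3) + av a (n-2) + av a (n-1)
  else if m + 1 = n then av a (n-2) + av a (n-1)
  else 0

def swf (p : ℕ) (v : ℕ → ZMod 2) : ℕ → ZMod 2 := fun m =>
  if m = p then v (p+1) else if m = p+1 then v p else v m

lemma yv_zero {n : ℕ} (a : Fin n → ZMod 2) : yv n a 0 = av a 0 := by
  unfold yv; rw [if_pos rfl]

lemma yv_mid {n : ℕ} (a : Fin n → ZMod 2) {m : ℕ} (h1 : 1 ≤ m) (h2 : m + 3 ≤ n) :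
    yv n a m = av a (m-1) + av a m := by
  unfold yv; rw [if_neg (by omega), if_pos h2]

lemma yv_fork1 {n : ℕ} (hn : 4 ≤ n) (a : Fin n → ZMod 2) :
    yv n a (n-2) = av a (n-3) + av a (n-2) + av a (n-1) := by
  unfold yv; rw [if_neg (by omega), if_neg (by omega), if_pos (by omega)]

lemma yv_fork2 {n : ℕ} (hn : 4 ≤ n) (a : Fin n → ZMod 2) :
    yv n a (n-1) = av a (n-2) + av a (n-1) := by
  unfold yv; rw [if_neg (by omega), if_neg (by omega), if_neg (by omega), if_pos (by omega)]

lemma yv_top {n : ℕ} (hn : 4 ≤ n) (a : Fin n → ZMod 2) {m : ℕ} (h : n ≤ m) :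
    yv n a m = 0 := by
  unfold yv; rw [if_neg (by omega), if_neg (by omega), if_neg (by omega), if_neg (by omega)]

-- char 2 helpers
lemma z2a : ∀ x y : ZMod 2, x + y + y = x := by decide
lemma z2b : ∀ x y : ZMod 2, x + (x + y) = y := by decide
lemma z2c : ∀ x y z : ZMod 2, x + (y + (x + z)) = y + z := by decide
lemma z2d : ∀ x y z : ZMod 2, (y + (x + z)) + z = x + y := by decide
lemma z2e : ∀ x y z w : ZMod 2, x + (y + (x + z + w)) = y + z + w := by decide
lemma z2f : ∀ x y z w : ZMod 2, (y + (x + z + w)) + z + w = x + y := by decide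
lemma z2g : ∀ x y z : ZMod 2, x + (y + x) + z = y + z := by decide
lemma z2h : ∀ x y z : ZMod 2, (y + x) + z = x + (y + z) := by decide
lemma z2i : ∀ x y z : ZMod 2, x + y + (z + x) = y + z := by decide
lemma z2j : ∀ x y z : ZMod 2, y + (z + x) = x + y + z := by decide
lemma z2k : ∀ x y z : ZMod 2, (y + x) + z = x + y + z := by decide

/-- KEY: a move acts on the y-transform as an adjacent transposition -/
lemma yv_move {n : ℕ} (hn : 4 ≤ n) (a : Fin n → ZMod 2) (i : Fin n) :
    yv n (move (DG n) i a) = swf (min i.val (n-2)) (yv n a) := by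
  set b := move (DG n) i a with hb
  funext m
  have hlt := i.isLt
  rcases Nat.lt_or_ge m n with hm | hm
  swap
  · -- m out of range: both sides yv at indices ≥ n... swf may move to p, p+1 < n? m ≥ n, p+1 ≤ n-1 < n so swf leaves m
    have hp : min i.val (n-2) + 1 < n := by omega
    unfold swf
    rw [if_neg (by omega), if_neg (by omega), yv_top hn _ hm, yv_top hn _ hm]
  · by_cases h0 : i.val = 0
    · -- p = 0, swap y_0 y_1
      have hp : min i.val (n-2) = 0 := by omega
      rw [hp]
      have hs : nsum a i.val = av a 1 := by unfold nsum; rw [if_pos h0]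
      unfold swf
      by_cases hm0 : m = 0
      · subst hm0
        rw [if_pos rfl, yv_zero, yv_mid a (by omega) (by omega)]
        norm_num
        rw [hb, ← h0, av_move_eq hn, hs]
      · by_cases hm1 : m = 1
        · subst hm1
          rw [if_neg (by omega), if_pos rfl, yv_mid b (by omega) (by omega), yv_zero]
          norm_num
          rw [hb, av_move_ne a i 1 (by omega), ← h0, av_move_eq hn, hs]
          exact z2a _ _
        · rw [if_neg hm0, if_neg (by omega)]
          -- m ≥ 2 : untouched
          rcases Nat.lt_or_ge m (n-2) with h2 | h2
          · rw [yv_mid b (by omega) (by omega), yv_mid a (by omega) (by omega),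
              av_move_ne a i (m-1) (by omega), av_move_ne a i m (by omega)]
          · rcases Nat.lt_or_ge m (n-1) with h3 | h3
            · have : m = n-2 := by omega
              subst this
              rw [yv_fork1 hn, yv_fork1 hn, av_move_ne a i (n-3) (by omega),
                av_move_ne a i (n-2) (by omega), av_move_ne a i (n-1) (by omega)]
            · have : m = n-1 := by omega
              subst this
              rw [yv_fork2 hn, yv_fork2 hn, av_move_ne a i (n-2) (by omega),
                av_move_ne a i (n-1) (by omega)]
    · rcases Nat.lt_or_ge i.val (n-3) with hI | hI
      · -- interior: 1 ≤ i ≤ n-4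
        have hp : min i.val (n-2) = i.val := by omega
        rw [hp]
        have hs : nsum a i.val = av a (i.val - 1) + av a (i.val + 1) := by
          unfold nsum; rw [if_neg h0, if_pos (by omega)]
        unfold swf
        by_cases hm0 : m = i.val
        · subst hm0
          rw [if_pos rfl, yv_mid b (by omega) (by omega), yv_mid a (by omega) (by omega),
            Nat.add_sub_cancel, hb, av_move_ne a i (i.val-1) (by omega), av_move_eq hn, hs]
          exact z2c _ _ _
        · by_cases hm1 : m = i.val + 1
          · subst hm1
            rw [if_neg hm0, if_pos rfl, yv_mid b (by omega) (by omega),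
              yv_mid a (by omega) (by omega), Nat.add_sub_cancel, hb,
              av_move_ne a i (i.val+1) (by omega), av_move_eq hn, hs]
            exact z2d _ _ _
          · rw [if_neg hm0, if_neg hm1]
            by_cases hz : m = 0
            · subst hz; rw [yv_zero, yv_zero, hb, av_move_ne a i 0 (by omega)]
            · rcases Nat.lt_or_ge m (n-2) with h2 | h2
              · rw [yv_mid b (by omega) (by omega), yv_mid a (by omega) (by omega), hb,
                  av_move_ne a i (m-1) (by omega), av_move_ne a i m (by omega)]
              · rcases Nat.lt_or_ge m (n-1) with h3 | h3
                · have : m = n-2 := by omega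
                  subst this
                  rw [yv_fork1 hn, yv_fork1 hn, hb, av_move_ne a i (n-3) (by omega),
                    av_move_ne a i (n-2) (by omega), av_move_ne a i (n-1) (by omega)]
                · have : m = n-1 := by omega
                  subst this
                  rw [yv_fork2 hn, yv_fork2 hn, hb, av_move_ne a i (n-2) (by omega),
                    av_move_ne a i (n-1) (by omega)]
      · rcases Nat.lt_or_ge i.val (n-2) with hI2 | hI2
        · -- fork vertex i = n-3
          have hi : i.val = n-3 := by omega
          have hp : min i.val (n-2) = n-3 := by omega
          rw [hp]
          have hs : nsum a i.val = av a (n-4) + av a (n-2) + av a (n-1) := by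
            unfold nsum; rw [if_neg h0, if_neg (by omega), if_pos (by omega)]
          unfold swf
          by_cases hm0 : m = n-3
          · subst hm0
            rw [if_pos rfl, show n-3+1 = n-2 by omega, yv_mid b (by omega) (by omega),
              yv_fork1 hn, show n-3-1 = n-4 by omega, hb, av_move_ne a i (n-4) (by omega),
              ← hi, av_move_eq hn, hs]
            exact z2e _ _ _ _
          · by_cases hm1 : m = n-3+1
            · rw [if_neg hm0, if_pos hm1]
              have : m = n-2 := by omega
              subst this
              rw [yv_fork1 hn, yv_mid a (by omega) (by omega), show n-3-1 = n-4 by omega,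
                hb, av_move_ne a i (n-2) (by omega), av_move_ne a i (n-1) (by omega),
                ← hi, av_move_eq hn, hs]
              exact z2f _ _ _ _
            · rw [if_neg hm0, if_neg hm1]
              by_cases hz : m = 0
              · subst hz; rw [yv_zero, yv_zero, hb, av_move_ne a i 0 (by omega)]
              · rcases Nat.lt_or_ge m (n-2) with h2 | h2
                · rw [yv_mid b (by omega) (by omega), yv_mid a (by omega) (by omega), hb,
                    av_move_ne a i (m-1) (by omega), av_move_ne a i m (by omega)]
                · have : m = n-1 := by omega
                  subst this
                  rw [yv_fork2 hn, yv_fork2 hn, hb, av_move_ne a i (n-2) (by omega),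
                    av_move_ne a i (n-1) (by omega)]
        · -- leaves i = n-2 or n-1
          have hp : min i.val (n-2) = n-2 := by omega
          rw [hp]
          have hs : nsum a i.val = av a (n-3) := by
            unfold nsum; rw [if_neg h0, if_neg (by omega), if_neg (by omega)]
          unfold swf
          rcases Nat.lt_or_ge i.val (n-1) with hI3 | hI3
          · -- i = n-2
            have hi : i.val = n-2 := by omega
            by_cases hm0 : m = n-2
            · subst hm0
              rw [if_pos rfl, show n-2+1 = n-1 by omega, yv_fork1 hn, yv_fork2 hn, hb,
                av_move_ne a i (n-3) (by omega), av_move_ne a i (n-1) (by omega),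
                ← hi, av_move_eq hn, hs]
              exact z2g _ _ _
            · by_cases hm1 : m = n-2+1
              · rw [if_neg hm0, if_pos hm1]
                have : m = n-1 := by omega
                subst this
                rw [yv_fork2 hn, yv_fork1 hn, hb, av_move_ne a i (n-1) (by omega),
                  ← hi, av_move_eq hn, hs]
                exact z2k _ _ _
              · rw [if_neg hm0, if_neg hm1]
                by_cases hz : m = 0
                · subst hz; rw [yv_zero, yv_zero, hb, av_move_ne a i 0 (by omega)]
                · rw [yv_mid b (by omega) (by omega), yv_mid a (by omega) (by omega), hb,
                    av_move_ne a i (m-1) (by omega), av_move_ne a i m (by omega)]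
          · -- i = n-1
            have hi : i.val = n-1 := by omega
            by_cases hm0 : m = n-2
            · subst hm0
              rw [if_pos rfl, show n-2+1 = n-1 by omega, yv_fork1 hn, yv_fork2 hn, hb,
                av_move_ne a i (n-3) (by omega), av_move_ne a i (n-2) (by omega),
                ← hi, av_move_eq hn, hs]
              exact z2i _ _ _
            · by_cases hm1 : m = n-2+1
              · rw [if_neg hm0, if_pos hm1]
                have : m = n-1 := by omega
                subst this
                rw [yv_fork2 hn, yv_fork1 hn, hb, av_move_ne a i (n-2) (by omega),
                  ← hi, av_move_eq hn, hs]
                exact z2j _ _ _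
              · rw [if_neg hm0, if_neg hm1]
                by_cases hz : m = 0
                · subst hz; rw [yv_zero, yv_zero, hb, av_move_ne a i 0 (by omega)]
                · rw [yv_mid b (by omega) (by omega), yv_mid a (by omega) (by omega), hb,
                    av_move_ne a i (m-1) (by omega), av_move_ne a i m (by omega)]

lemma z2a' : ∀ x y : ZMod 2, x + y + y = x := by decide

lemma move_invol {V : Type} [Fintype V] [DecidableEq V] (D : SimpleGraph V)
    [DecidableRel D.Adj] (i : V) (a : V → ZMod 2) : move D i (move D i a) = a := by
  funext j
  by_cases hj : j = i
  · subst hj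
    show move D j (move D j a) j = a j
    have hsum : ∑ k ∈ D.neighborFinset j, (move D j a) k = ∑ k ∈ D.neighborFinset j, a k := by
      apply Finset.sum_congr rfl
      intro k hk
      have hne : k ≠ j := by
        intro h; subst h
        exact D.irrefl ((SimpleGraph.mem_neighborFinset _ _ _).mp hk)
      show (if k = j then _ else a k) = a k
      rw [if_neg hne]
    show (if j = j then (move D j a) j + _ else _) = a j
    rw [if_pos rfl, hsum]
    show (if j = j then a j + _ else _) + _ = a j
    rw [if_pos rfl]
    exact z2a' _ _
  · show (if j = i then _ else (move D i a) j) = a j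
    rw [if_neg hj]
    show (if j = i then _ else a j) = a j
    rw [if_neg hj]

lemma reederStep_symm {V : Type} [Fintype V] [DecidableEq V] (D : SimpleGraph V)
    [DecidableRel D.Adj] {a b : V → ZMod 2} (h : reederStep D a b) : reederStep D b a := by
  obtain ⟨i, rfl⟩ := h
  exact ⟨i, (move_invol D i a).symm⟩

def vwgt (n : ℕ) (v : ℕ → ZMod 2) : ℕ := ((Finset.range n).filter (fun m => v m = 1)).card

def vstep (n : ℕ) (v w : ℕ → ZMod 2) : Prop := ∃ p, p + 2 ≤ n ∧ w = swf p v

def zeroOff (n : ℕ) (v : ℕ → ZMod 2) : Prop := ∀ m, n ≤ m → v m = 0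

def canon (n W : ℕ) : ℕ → ZMod 2 := fun m => if n - W ≤ m ∧ m < n then 1 else 0

lemma swf_invol (p : ℕ) (v : ℕ → ZMod 2) : swf p (swf p v) = v := by
  funext m
  unfold swf
  by_cases h1 : m = p
  · subst h1; rw [if_pos rfl, if_neg (by omega), if_pos rfl]
  · by_cases h2 : m = p+1
    · subst h2; rw [if_neg h1, if_pos rfl, if_pos rfl]
    · rw [if_neg h1, if_neg h2, if_neg h1, if_neg h2]

lemma vstep_symm {n : ℕ} : Symmetric (vstep n) := by
  rintro v w ⟨p, hp, rfl⟩
  exact ⟨p, hp, (swf_invol p v).symm⟩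

lemma rtg_symm {n : ℕ} {v w : ℕ → ZMod 2}
    (h : Relation.ReflTransGen (vstep n) v w) : Relation.ReflTransGen (vstep n) w v :=
  (@Relation.ReflTransGen.stdSymm _ (vstep n) ⟨fun _ _ h => vstep_symm h⟩).symm _ _ h

lemma vwgt_swf {n p : ℕ} (hp : p + 2 ≤ n) (v : ℕ → ZMod 2) :
    vwgt n (swf p v) = vwgt n v := by
  unfold vwgt
  apply Finset.card_bij'
    (fun m _ => if m = p then p+1 else if m = p+1 then p else m)
    (fun m _ => if m = p then p+1 else if m = p+1 then p else m)
  · intro m hm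
    simp only [Finset.mem_filter, Finset.mem_range] at hm ⊢
    unfold swf at hm
    by_cases h1 : m = p
    · subst h1; rw [if_pos rfl] at hm ⊢; exact ⟨by omega, hm.2⟩
    · by_cases h2 : m = p+1
      · subst h2; rw [if_neg h1, if_pos rfl] at hm; rw [if_neg h1, if_pos rfl]
        exact ⟨by omega, hm.2⟩
      · rw [if_neg h1, if_neg h2] at hm ⊢; exact hm
  · intro m hm
    simp only [Finset.mem_filter, Finset.mem_range] at hm ⊢
    unfold swf
    by_cases h1 : m = p
    · subst h1; rw [if_pos rfl, if_neg (by omega), if_pos rfl]; exact ⟨by omega, hm.2⟩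
    · by_cases h2 : m = p+1
      · subst h2; rw [if_neg h1, if_pos rfl, if_pos rfl]; exact ⟨by omega, hm.2⟩
      · rw [if_neg h1, if_neg h2, if_neg h1, if_neg h2]; exact hm
  · intro m _
    by_cases h1 : m = p
    · subst h1; rw [if_pos rfl, if_neg (by omega), if_pos rfl]
    · by_cases h2 : m = p+1
      · subst h2; rw [if_neg h1, if_pos rfl, if_pos rfl]
      · rw [if_neg h1, if_neg h2, if_neg h1, if_neg h2]
  · intro m _
    by_cases h1 : m = p
    · subst h1; rw [if_pos rfl, if_neg (by omega), if_pos rfl]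
    · by_cases h2 : m = p+1
      · subst h2; rw [if_neg h1, if_pos rfl, if_pos rfl]
      · rw [if_neg h1, if_neg h2, if_neg h1, if_neg h2]

lemma vwgt_rtg {n : ℕ} {v w : ℕ → ZMod 2}
    (h : Relation.ReflTransGen (vstep n) v w) : vwgt n w = vwgt n v := by
  induction h with
  | refl => rfl
  | tail _ hstep ih => obtain ⟨p, hp, rfl⟩ := hstep; rw [vwgt_swf hp]; exact ih

lemma zeroOff_rtg {n : ℕ} {v w : ℕ → ZMod 2} (hv : zeroOff n v)
    (h : Relation.ReflTransGen (vstep n) v w) : zeroOff n w := by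
  induction h with
  | refl => exact hv
  | tail _ hstep ih =>
      obtain ⟨p, hp, rfl⟩ := hstep
      intro m hm
      unfold swf
      rw [if_neg (by omega), if_neg (by omega)]
      exact ih m hm

lemma bubble {n : ℕ} (d : ℕ) : ∀ (v : ℕ → ZMod 2) (q : ℕ), q + d < n →
    ∃ w, Relation.ReflTransGen (vstep n) v w ∧ w (q+d) = v q ∧
      (∀ m, q + d < m → w m = v m) := by
  induction d with
  | zero => intro v q _; exact ⟨v, .refl, rfl, fun _ _ => rfl⟩
  | succ d ih =>
      intro v q hq
      obtain ⟨w, hrtg, hw1, hw2⟩ := ih v q (by omega)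
      refine ⟨swf (q+d) w, hrtg.tail ⟨q+d, by omega, rfl⟩, ?_, ?_⟩
      · show swf (q+d) w (q+d+1) = v q
        unfold swf
        rw [if_neg (by omega), if_pos rfl]
        exact hw1
      · intro m hm
        unfold swf
        rw [if_neg (by omega), if_neg (by omega)]
        exact hw2 m (by omega)

lemma tocanon {n W : ℕ} (hW : W ≤ n) :
    ∀ (t : ℕ) (v : ℕ → ZMod 2), zeroOff n v → vwgt n v = W →
      (∀ m, t ≤ m → m < n → v m = canon n W m) →
      Relation.ReflTransGen (vstep n) v (canon n W) := by
  intro t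
  induction t with
  | zero =>
      intro v hz _ hs
      have hv : v = canon n W := by
        funext m
        by_cases h : m < n
        · exact hs m (by omega) h
        · rw [hz m (by omega)]; unfold canon; rw [if_neg (by omega)]
      rw [hv]
  | succ t ih =>
      intro v hz hw hs
      by_cases hvt : v t = canon n W t
      · exact ih v hz hw (fun m hm hmn => by
          rcases Nat.eq_or_lt_of_le hm with h | h
          · rw [← h]; exact hvt
          · exact hs m (by omega) hmn)
      · have htn : t < n := by
          by_contra h
          exact hvt (by rw [hz t (by omega)]; unfold canon; rw [if_neg (by omega)])
        have hzo : ∀ (x : ZMod 2), x ≠ 1 → x = 0 := by decide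
        have hzo' : ∀ (x : ZMod 2), x ≠ 0 → x = 1 := by decide
        unfold vwgt at hw
        by_cases hc : n - W ≤ t
        · -- canon t = 1, v t = 0: bubble a 1 from below t up to t
          have hct : canon n W t = 1 := by unfold canon; rw [if_pos ⟨hc, htn⟩]
          have hvt0 : v t = 0 := hzo _ (fun h => hvt (h.trans hct.symm))
          have hWpos : 1 ≤ W := by omega
          -- find q < t with v q = 1
          have hq : ∃ q, q < t ∧ v q = 1 := by
            by_contra hno
            push_neg at hno
            have hsub : (Finset.range n).filter (fun m => v m = 1) ⊆ Finset.Ico (t+1) n := by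
              intro m hm
              rw [Finset.mem_filter, Finset.mem_range] at hm
              rw [Finset.mem_Ico]
              refine ⟨?_, hm.1⟩
              by_contra hlt
              rcases Nat.lt_or_ge m t with h | h
              · exact hno m h hm.2
              · have : m = t := by omega
                rw [this, hvt0] at hm
                exact one_ne_zero hm.2.symm
            have := Finset.card_le_card hsub
            rw [hw, Nat.card_Ico] at this
            omega
          obtain ⟨q, hqt, hqv⟩ := hq
          obtain ⟨w, hrtg, hw1, hw2⟩ := bubble (n := n) (t - q) v q (by omega)
          have hqd : q + (t - q) = t := by omega
          rw [hqd] at hw1 hw2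
          refine hrtg.trans (ih w (zeroOff_rtg hz hrtg) ?_ ?_)
          · rw [vwgt_rtg hrtg]; exact hw
          · intro m hm hmn
            rcases Nat.eq_or_lt_of_le hm with h | h
            · rw [← h, hw1, hqv]; exact hct.symm
            · rw [hw2 m h]; exact hs m (by omega) hmn
        · -- canon t = 0, v t = 1: impossible by counting
          exfalso
          have hct : canon n W t = 0 := by unfold canon; rw [if_neg (by omega)]
          have hvt1 : v t = 1 := hzo' _ (fun h => hvt (h.trans hct.symm))
          have hsub : insert t (Finset.Ico (n-W) n) ⊆
              (Finset.range n).filter (fun m => v m = 1) := by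
            intro m hm
            rw [Finset.mem_insert, Finset.mem_Ico] at hm
            rw [Finset.mem_filter, Finset.mem_range]
            rcases hm with rfl | hm
            · exact ⟨htn, hvt1⟩
            · refine ⟨hm.2, ?_⟩
              rw [hs m (by omega) hm.2]
              unfold canon; rw [if_pos ⟨hm.1, hm.2⟩]
          have hcard := Finset.card_le_card hsub
          rw [Finset.card_insert_of_notMem (by rw [Finset.mem_Ico]; omega),
            Nat.card_Ico, hw] at hcard
          omega

lemma vwgt_le {n : ℕ} (v : ℕ → ZMod 2) : vwgt n v ≤ n := by
  unfold vwgt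
  calc ((Finset.range n).filter _).card ≤ (Finset.range n).card := Finset.card_filter_le _ _
    _ = n := Finset.card_range n

lemma vconn {n : ℕ} {v w : ℕ → ZMod 2} (hv : zeroOff n v) (hw : zeroOff n w)
    (heq : vwgt n v = vwgt n w) : Relation.ReflTransGen (vstep n) v w := by
  have h1 := tocanon (W := vwgt n v) (vwgt_le v) n v hv rfl
    (fun m hm hmn => by omega)
  have h2 := tocanon (W := vwgt n v) (vwgt_le v) n w hw heq.symm
    (fun m hm hmn => by omega)
  exact h1.trans (rtg_symm h2)


def Lvec (n : ℕ) : Fin n → ZMod 2 := fun j => if n - 2 ≤ j.val then 1 else 0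

def wgt (n : ℕ) (a : Fin n → ZMod 2) : ℕ := vwgt n (yv n a)

lemma av_eq {n : ℕ} (a : Fin n → ZMod 2) (j : Fin n) : av a j.val = a j := by
  unfold av; rw [dif_pos j.isLt]

lemma z2z : ∀ x y : ZMod 2, x + y = 0 → y = x := by decide
lemma z2w : ∀ x y : ZMod 2, x + y = 0 → x = y := by decide
lemma z2self : ∀ x : ZMod 2, x + x = 0 := by decide
lemma z2move : ∀ x y z : ZMod 2, x + y = z → x = y + z := by decide
lemma z2cases : ∀ x : ZMod 2, x = 0 ∨ x = 1 := by decide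
lemma z2sum : ∀ x y z : ZMod 2, x + (x + y + z) + (y + z) = 0 := by decide
lemma z2ne : ∀ x : ZMod 2, x ≠ 1 → x = 0 := by decide

lemma yv_zeroOff {n : ℕ} (hn : 4 ≤ n) (a : Fin n → ZMod 2) : zeroOff n (yv n a) :=
  fun _ hm => yv_top hn a hm

lemma av_add {n : ℕ} (a b : Fin n → ZMod 2) (m : ℕ) : av (a + b) m = av a m + av b m := by
  unfold av; split
  · rfl
  · rw [add_zero]

lemma yv_add {n : ℕ} (a b : Fin n → ZMod 2) (m : ℕ) :
    yv n (a + b) m = yv n a m + yv n b m := by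
  unfold yv
  split_ifs <;> simp [av_add] <;> ring

lemma yv_partial {n : ℕ} (hn : 4 ≤ n) (a : Fin n → ZMod 2) :
    ∀ t, 1 ≤ t → t ≤ n - 2 → ∑ m ∈ Finset.range t, yv n a m = av a (t-1) := by
  intro t
  induction t with
  | zero => omega
  | succ t ih =>
      intro _ h2
      by_cases ht : t = 0
      · subst ht
        rw [Finset.sum_range_one, yv_zero]
      · rw [Finset.sum_range_succ, ih (by omega) (by omega),
          yv_mid a (by omega) (by omega), Nat.add_sub_cancel]
        exact z2b _ _

lemma yv_sum {n : ℕ} (hn : 4 ≤ n) (a : Fin n → ZMod 2) :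
    ∑ m ∈ Finset.range n, yv n a m = 0 := by
  obtain ⟨K, rfl⟩ : ∃ K, n = K + 2 := ⟨n - 2, by omega⟩
  rw [Finset.sum_range_succ, Finset.sum_range_succ,
    yv_partial hn a K (by omega) (by omega)]
  have e1 : yv (K+2) a K = av a (K-1) + av a K + av a (K+1) := yv_fork1 hn a
  have e2 : yv (K+2) a (K+1) = av a K + av a (K+1) := yv_fork2 hn a
  rw [e1, e2]
  exact z2sum _ _ _

lemma sum_eq_card (v : ℕ → ZMod 2) (s : Finset ℕ) :
    ∑ m ∈ s, v m = (((s.filter (fun m => v m = 1)).card : ℕ) : ZMod 2) := by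
  rw [← Finset.sum_filter_add_sum_filter_not s (fun m => v m = 1)]
  have h1 : ∑ m ∈ s.filter (fun m => v m = 1), v m
      = ((s.filter (fun m => v m = 1)).card : ZMod 2) := by
    rw [Finset.sum_congr rfl (fun m hm => (Finset.mem_filter.mp hm).2),
      Finset.sum_const, nsmul_eq_mul, mul_one]
  have h2 : ∑ m ∈ s.filter (fun m => ¬ v m = 1), v m = 0 := by
    apply Finset.sum_eq_zero
    intro m hm
    exact z2ne _ (Finset.mem_filter.mp hm).2
  rw [h1, h2, add_zero]

lemma wgt_even {n : ℕ} (hn : 4 ≤ n) (a : Fin n → ZMod 2) : wgt n a % 2 = 0 := by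
  have h := yv_sum hn a
  rw [sum_eq_card] at h
  have := (ZMod.natCast_eq_zero_iff _ 2).mp h
  have : 2 ∣ wgt n a := this
  omega

lemma yv_ker {n : ℕ} (hn : 4 ≤ n) (a : Fin n → ZMod 2) (h : ∀ m, yv n a m = 0) :
    a = (fun _ => 0) ∨ a = Lvec n := by
  have h0 : av a 0 = 0 := by have := h 0; rwa [yv_zero] at this
  have hup : ∀ m, m ≤ n - 3 → av a m = 0 := by
    intro m
    induction m with
    | zero => intro _; exact h0
    | succ m ih =>
        intro hm
        have hh := h (m+1)
        rw [yv_mid a (by omega) (by omega), Nat.add_sub_cancel, ih (by omega), zero_add] at hh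
        exact hh
  have hlast : av a (n-1) = av a (n-2) := by
    have := h (n-1); rw [yv_fork2 hn] at this; exact z2z _ _ this
  rcases z2cases (av a (n-2)) with hc | hc
  · left
    funext j
    rw [← av_eq a j]
    rcases Nat.lt_or_ge j.val (n-2) with hj | hj
    · exact hup _ (by omega)
    · rcases Nat.lt_or_ge j.val (n-1) with hj2 | hj2
      · rw [show j.val = n-2 by omega, hc]
      · rw [show j.val = n-1 by omega, hlast, hc]
  · right
    funext j
    rw [← av_eq a j]
    unfold Lvec
    rcases Nat.lt_or_ge j.val (n-2) with hj | hj
    · rw [if_neg (by omega)]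
      exact hup _ (by omega)
    · rw [if_pos (by omega)]
      rcases Nat.lt_or_ge j.val (n-1) with hj2 | hj2
      · rw [show j.val = n-2 by omega, hc]
      · rw [show j.val = n-1 by omega, hlast, hc]

lemma yv_inj2 {n : ℕ} (hn : 4 ≤ n) (a b : Fin n → ZMod 2) (h : ∀ m, yv n a m = yv n b m) :
    a = b ∨ a = b + Lvec n := by
  have hz : ∀ m, yv n (a + b) m = 0 := by
    intro m; rw [yv_add, h m]; exact z2self _
  rcases yv_ker hn (a+b) hz with hc | hc
  · left
    funext j
    have := congrFun hc j
    exact z2w _ _ this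
  · right
    funext j
    have := congrFun hc j
    exact z2move _ _ _ this

lemma realize {n : ℕ} (hn : 4 ≤ n) (v : ℕ → ZMod 2) (hz : zeroOff n v)
    (hsum : ∑ m ∈ Finset.range n, v m = 0) : ∃ a : Fin n → ZMod 2, ∀ m, yv n a m = v m := by
  refine ⟨fun j => if j.val ≤ n-3 then ∑ m ∈ Finset.range (j.val+1), v m
    else if j.val = n-2 then 0 else v (n-1), ?_⟩
  set a : Fin n → ZMod 2 := fun j => if j.val ≤ n-3 then ∑ m ∈ Finset.range (j.val+1), v m
    else if j.val = n-2 then 0 else v (n-1) with ha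
  have hav : ∀ m, m ≤ n-3 → av a m = ∑ k ∈ Finset.range (m+1), v k := by
    intro m hm
    unfold av
    rw [dif_pos (by omega)]
    show (if m ≤ n-3 then _ else _) = _
    rw [if_pos hm]
  have hav2 : av a (n-2) = 0 := by
    unfold av
    rw [dif_pos (by omega)]
    show (if n-2 ≤ n-3 then _ else if n-2 = n-2 then _ else _) = _
    rw [if_neg (by omega), if_pos rfl]
  have hav3 : av a (n-1) = v (n-1) := by
    unfold av
    rw [dif_pos (by omega)]
    show (if n-1 ≤ n-3 then _ else if n-1 = n-2 then _ else _) = _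
    rw [if_neg (by omega), if_neg (by omega)]
  have htot : ∑ k ∈ Finset.range (n-2), v k = v (n-2) + v (n-1) := by
    have h1 : ∑ k ∈ Finset.range n, v k
        = ∑ k ∈ Finset.range (n-2), v k + v (n-2) + v (n-1) := by
      obtain ⟨K, hK⟩ : ∃ K, n = K + 2 := ⟨n - 2, by omega⟩
      subst hK
      rw [Finset.sum_range_succ, Finset.sum_range_succ]
      norm_num
    rw [h1] at hsum
    have := z2z _ _ hsum   -- (S + v(n-2)) + v(n-1) = 0 → v(n-1) = S + v(n-2)
    -- goal: S = v(n-2) + v(n-1)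
    rw [this]
    generalize (∑ k ∈ Finset.range (n-2), v k) = X
    generalize v (n-2) = Y
    revert X Y
    decide
  intro m
  by_cases hm0 : m = 0
  · subst hm0
    rw [yv_zero, hav 0 (by omega), Finset.sum_range_one]
  · rcases Nat.lt_or_ge m (n-2) with h2 | h2
    · have hs : ∑ k ∈ Finset.range (m+1), v k = ∑ k ∈ Finset.range (m-1+1), v k + v m := by
        rw [show m+1 = (m-1+1)+1 by omega, Finset.sum_range_succ, show m-1+1 = m by omega]
      rw [yv_mid a (by omega) (by omega), hav (m-1) (by omega), hav m (by omega), hs]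
      exact z2b _ _
    · rcases Nat.lt_or_ge m (n-1) with h3 | h3
      · rw [show m = n-2 by omega, yv_fork1 hn, hav (n-3) (by omega), hav2, hav3,
          show n-3+1 = n-2 by omega, htot, add_zero]
        exact z2a _ _
      · rcases Nat.lt_or_ge m n with h4 | h4
        · rw [show m = n-1 by omega, yv_fork2 hn, hav2, hav3, zero_add]
        · rw [yv_top hn a h4, hz m h4]

def RL (n : ℕ) (a b : Fin n → ZMod 2) : Prop :=
  Quot.mk (reederStep (DG n)) a = Quot.mk (reederStep (DG n)) b

lemma rel_move {n : ℕ} (a : Fin n → ZMod 2) (i : Fin n) : RL n a (move (DG n) i a) :=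
  Quot.sound ⟨i, rfl⟩

lemma lift {n : ℕ} (hn : 4 ≤ n) (a : Fin n → ZMod 2) (v : ℕ → ZMod 2)
    (h : Relation.ReflTransGen (vstep n) (yv n a) v) :
    ∃ b, RL n a b ∧ yv n b = v := by
  induction h with
  | refl => exact ⟨a, rfl, rfl⟩
  | tail hab hstep ih =>
      obtain ⟨b, hb1, hb2⟩ := ih
      obtain ⟨p, hp, rfl⟩ := hstep
      refine ⟨move (DG n) ⟨p, by omega⟩ b, hb1.trans (rel_move b ⟨p, by omega⟩), ?_⟩
      rw [yv_move hn b ⟨p, by omega⟩, hb2]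
      have : min ((⟨p, by omega⟩ : Fin n).val) (n-2) = p := by
        simp only []
        omega
      rw [this]

lemma wgt_move {n : ℕ} (hn : 4 ≤ n) (a : Fin n → ZMod 2) (i : Fin n) :
    wgt n (move (DG n) i a) = wgt n a := by
  unfold wgt
  rw [yv_move hn a i]
  exact vwgt_swf (by have := i.isLt; omega) _

lemma wgt_rel {n : ℕ} (hn : 4 ≤ n) {a b : Fin n → ZMod 2} (h : RL n a b) :
    wgt n a = wgt n b := by
  have := congrArg (Quot.lift (wgt n)
    (fun x y hxy => by obtain ⟨i, rfl⟩ := hxy; exact (wgt_move hn x i).symm)) h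
  exact this

lemma fixed_rel {n : ℕ} {c : Fin n → ZMod 2} (hfix : ∀ i, move (DG n) i c = c) :
    ∀ b, RL n c b → c = b := by
  intro b h
  have h' := Quot.eq.mp h
  have key : ∀ x y : Fin n → ZMod 2, Relation.EqvGen (reederStep (DG n)) x y →
      ((x = c → x = y) ∧ (y = c → y = x)) := by
    intro x y hxy
    induction hxy with
    | rel x y hr =>
        obtain ⟨i, rfl⟩ := hr
        constructor
        · intro hx; subst hx; rw [hfix i]
        · intro hy
          have hx : x = c := by
            have h1 : move (DG n) i (move (DG n) i x) = x := move_invol _ _ _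
            rw [hy, hfix i] at h1
            exact h1.symm
          rw [hx, hfix i]
    | refl x => exact ⟨fun _ => rfl, fun _ => rfl⟩
    | symm x y _ ih => exact ⟨ih.2, ih.1⟩
    | trans x y z _ _ ih1 ih2 =>
        constructor
        · intro hx
          have hxy := ih1.1 hx
          have hy : y = c := hxy.symm.trans hx
          exact hxy.trans (ih2.1 hy)
        · intro hz
          have hzy := ih2.2 hz
          have hy : y = c := hzy.symm.trans hz
          exact hzy.trans (ih1.2 hy)
  exact ((key c b h').1 rfl)

lemma fix_of_nsum {n : ℕ} (hn : 4 ≤ n) {c : Fin n → ZMod 2}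
    (hns : ∀ i : Fin n, nsum c i.val = 0) : ∀ i, move (DG n) i c = c := by
  intro i
  funext j
  unfold move
  by_cases hj : j = i
  · subst hj
    rw [if_pos rfl, nbr_sum hn, hns j, add_zero]
  · rw [if_neg hj]

lemma av_Lvec {n : ℕ} (m : ℕ) : av (Lvec n) m = if n - 2 ≤ m ∧ m < n then 1 else 0 := by
  unfold av Lvec
  by_cases h : m < n
  · rw [dif_pos h]
    show (if n - 2 ≤ m then (1 : ZMod 2) else 0) = _
    by_cases h2 : n - 2 ≤ m
    · rw [if_pos h2, if_pos ⟨h2, h⟩]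
    · rw [if_neg h2, if_neg (by omega)]
  · rw [dif_neg h, if_neg (by omega)]

lemma Lvec_fixed {n : ℕ} (hn : 4 ≤ n) : ∀ i, move (DG n) i (Lvec n) = Lvec n := by
  apply fix_of_nsum hn
  intro i
  have hlt := i.isLt
  unfold nsum
  by_cases h0 : i.val = 0
  · rw [if_pos h0, av_Lvec, if_neg (by omega)]
  · rw [if_neg h0]
    by_cases h1 : i.val + 4 ≤ n
    · rw [if_pos h1, av_Lvec, av_Lvec, if_neg (by omega), if_neg (by omega), add_zero]
    · rw [if_neg h1]
      by_cases h2 : i.val + 3 = n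
      · rw [if_pos h2, av_Lvec, av_Lvec, av_Lvec, if_neg (by omega),
          if_pos (by omega), if_pos (by omega)]
        decide
      · rw [if_neg h2, av_Lvec, if_neg (by omega)]

lemma yv_Lvec {n : ℕ} (hn : 4 ≤ n) (m : ℕ) : yv n (Lvec n) m = 0 := by
  by_cases h0 : m = 0
  · subst h0; rw [yv_zero, av_Lvec, if_neg (by omega)]
  · rcases Nat.lt_or_ge m (n-2) with h1 | h1
    · rw [yv_mid _ (by omega) (by omega), av_Lvec, av_Lvec, if_neg (by omega),
        if_neg (by omega), add_zero]
    · rcases Nat.lt_or_ge m (n-1) with h2 | h2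
      · rw [show m = n-2 by omega, yv_fork1 hn, av_Lvec, av_Lvec, av_Lvec,
          if_neg (by omega), if_pos (by omega), if_pos (by omega)]
        decide
      · rcases Nat.lt_or_ge m n with h3 | h3
        · rw [show m = n-1 by omega, yv_fork2 hn, av_Lvec, av_Lvec,
            if_pos (by omega), if_pos (by omega)]
          decide
        · exact yv_top hn _ h3

lemma wgt_Lvec {n : ℕ} (hn : 4 ≤ n) : wgt n (Lvec n) = 0 := by
  unfold wgt vwgt
  rw [Finset.card_eq_zero, Finset.filter_eq_empty_iff]
  intro m _
  rw [yv_Lvec hn]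
  exact fun h => one_ne_zero h.symm

lemma rel_Lflip {n : ℕ} (hn : 4 ≤ n) (c : Fin n → ZMod 2) (hc : av c (n-3) = 1) :
    RL n c (c + Lvec n) := by
  have h2n : n - 2 < n := by omega
  have h1n : n - 1 < n := by omega
  set i1 : Fin n := ⟨n-2, h2n⟩ with hi1
  set i2 : Fin n := ⟨n-1, h1n⟩ with hi2
  have hns1 : ∀ d : Fin n → ZMod 2, nsum d i1.val = av d (n-3) := by
    intro d; unfold nsum
    rw [if_neg (by simp [hi1]; omega), if_neg (by simp [hi1]; omega),
      if_neg (by simp [hi1]; omega)]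
  have hns2 : ∀ d : Fin n → ZMod 2, nsum d i2.val = av d (n-3) := by
    intro d; unfold nsum
    rw [if_neg (by simp [hi2]; omega), if_neg (by simp [hi2]; omega),
      if_neg (by simp [hi2]; omega)]
  have hLn3 : av (Lvec n) (n-3) = 0 := by rw [av_Lvec, if_neg (by omega)]
  have key : move (DG n) i2 c = move (DG n) i1 (c + Lvec n) := by
    funext j
    unfold move
    rw [nbr_sum hn, nbr_sum hn, hns1, hns2]
    by_cases h1 : j = i2
    · subst h1
      rw [if_pos rfl, if_neg (by simp [hi1, hi2, Fin.ext_iff]; omega)]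
      show c i2 + av c (n - 3) = c i2 + Lvec n i2
      rw [hc]
      unfold Lvec
      rw [if_pos (show n - 2 ≤ i2.val by rw [hi2]; simp; omega)]
    · by_cases h2 : j = i1
      · subst h2
        rw [if_neg (by simp [hi1, hi2, Fin.ext_iff]; omega), if_pos rfl]
        show c i1 = c i1 + Lvec n i1 + av (c + Lvec n) (n - 3)
        rw [av_add, hc, hLn3]
        unfold Lvec
        rw [if_pos (show n - 2 ≤ i1.val by rw [hi1])]
        have : ∀ x : ZMod 2, x = x + 1 + (1 + 0) := by decide
        exact this _
      · rw [if_neg h1, if_neg h2]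
        show c j = c j + Lvec n j
        unfold Lvec
        rw [if_neg (by
          simp only [hi1, hi2, Fin.ext_iff] at h1 h2
          have := j.isLt
          omega), add_zero]
  have r1 : RL n c (move (DG n) i2 c) := rel_move c i2
  have r2 : RL n (c + Lvec n) (move (DG n) i1 (c + Lvec n)) := rel_move _ i1
  rw [← key] at r2
  exact r1.trans r2.symm

lemma natcast_odd {c : ℕ} (h : c % 2 = 1) : ((c : ℕ) : ZMod 2) = 1 := by
  rw [← ZMod.natCast_mod, h]
  rfl

lemma av_fiber {n : ℕ} (hn : 4 ≤ n) {w : ℕ} (hw0 : 0 < w) (hwn : w < n) (hwe : w % 2 = 0)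
    (c : Fin n → ZMod 2)
    (hc : ∀ m, yv n c m = (fun m => if n-1-w ≤ m ∧ m < n-1 then (1 : ZMod 2) else 0) m) :
    av c (n-3) = 1 := by
  have htel := yv_partial hn c (n-2) (by omega) (by omega)
  have h1 : ∑ m ∈ Finset.range (n-2), yv n c m
      = ∑ m ∈ Finset.range (n-2), (fun m => if n-1-w ≤ m ∧ m < n-1 then (1 : ZMod 2) else 0) m :=
    Finset.sum_congr rfl (fun m _ => hc m)
  rw [h1] at htel
  rw [sum_eq_card] at htel
  have hfil : (Finset.range (n-2)).filter
      (fun m => (fun m => if n-1-w ≤ m ∧ m < n-1 then (1 : ZMod 2) else 0) m = 1)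
      = Finset.Ico (n-1-w) (n-2) := by
    ext m
    rw [Finset.mem_filter, Finset.mem_range, Finset.mem_Ico]
    constructor
    · rintro ⟨h1, h2⟩
      have h2' : (if n-1-w ≤ m ∧ m < n-1 then (1:ZMod 2) else 0) = 1 := h2
      by_cases hcond : n-1-w ≤ m ∧ m < n-1
      · exact ⟨hcond.1, h1⟩
      · rw [if_neg hcond] at h2'
        exact absurd h2'.symm one_ne_zero
    · rintro ⟨h1, h2⟩
      refine ⟨h2, ?_⟩
      show (if n-1-w ≤ m ∧ m < n-1 then (1:ZMod 2) else 0) = 1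
      rw [if_pos ⟨h1, by omega⟩]
  rw [hfil, Nat.card_Ico] at htel
  have hcast : (((n-2) - (n-1-w) : ℕ) : ZMod 2) = 1 := natcast_odd (by omega)
  rw [hcast] at htel
  rw [show n-2-1 = n-3 by omega] at htel
  exact htel.symm

lemma rel_of_wgt_mid {n : ℕ} (hn : 4 ≤ n) (a b : Fin n → ZMod 2)
    (hw : wgt n a = wgt n b) (h0 : 0 < wgt n a) (h1 : wgt n a < n) : RL n a b := by
  set w := wgt n a with hwdef
  set vs : ℕ → ZMod 2 := fun m => if n-1-w ≤ m ∧ m < n-1 then 1 else 0 with hvs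
  have hvz : zeroOff n vs := by
    intro m hm
    rw [hvs]
    show (if n-1-w ≤ m ∧ m < n-1 then (1:ZMod 2) else 0) = 0
    rw [if_neg (by omega)]
  have hvw : vwgt n vs = w := by
    unfold vwgt
    have : (Finset.range n).filter (fun m => vs m = 1) = Finset.Ico (n-1-w) (n-1) := by
      ext m
      rw [Finset.mem_filter, Finset.mem_range, Finset.mem_Ico]
      constructor
      · rintro ⟨hm, h2⟩
        have h2' : (if n-1-w ≤ m ∧ m < n-1 then (1:ZMod 2) else 0) = 1 := h2
        by_cases hcond : n-1-w ≤ m ∧ m < n-1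
        · exact hcond
        · rw [if_neg hcond] at h2'
          exact absurd h2'.symm one_ne_zero
      · rintro ⟨hA, hB⟩
        refine ⟨by omega, ?_⟩
        show (if n-1-w ≤ m ∧ m < n-1 then (1:ZMod 2) else 0) = 1
        rw [if_pos ⟨hA, hB⟩]
    rw [this, Nat.card_Ico]
    omega
  obtain ⟨c, hc1, hc2⟩ := lift hn a vs (vconn (yv_zeroOff hn a) hvz (by rw [hvw]; rfl))
  obtain ⟨d, hd1, hd2⟩ := lift hn b vs (vconn (yv_zeroOff hn b) hvz (by rw [hvw]; exact hw.symm))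
  have hwe : w % 2 = 0 := by rw [hwdef]; exact wgt_even hn a
  have havc : av c (n-3) = 1 := av_fiber hn h0 h1 hwe c (fun m => by rw [hc2])
  have havd : av d (n-3) = 1 := av_fiber hn h0 h1 hwe d (fun m => by rw [hd2])
  rcases yv_inj2 hn c d (fun m => by rw [hc2, hd2]) with hcd | hcd
  · exact hc1.trans (hcd ▸ hd1.symm)
  · have hflip : RL n d (d + Lvec n) := rel_Lflip hn d havd
    rw [← hcd] at hflip
    exact hc1.trans (hflip.symm.trans hd1.symm)

def uvec (n : ℕ) : Fin n → ZMod 2 :=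
  fun j => if j.val = n-2 ∨ (j.val % 2 = 0 ∧ j.val ≤ n-4) then 1 else 0

lemma av_uvec {n : ℕ} (m : ℕ) :
    av (uvec n) m = if (m = n-2 ∨ (m % 2 = 0 ∧ m ≤ n-4)) ∧ m < n then 1 else 0 := by
  unfold av uvec
  by_cases h : m < n
  · rw [dif_pos h]
    show (if m = n-2 ∨ (m % 2 = 0 ∧ m ≤ n-4) then (1:ZMod 2) else 0) = _
    by_cases h2 : m = n-2 ∨ (m % 2 = 0 ∧ m ≤ n-4)
    · rw [if_pos h2, if_pos ⟨h2, h⟩]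
    · rw [if_neg h2, if_neg (by tauto)]
  · rw [dif_neg h, if_neg (by tauto)]

lemma uvec_fixed {n : ℕ} (hn : 4 ≤ n) (hev : n % 2 = 0) :
    ∀ i, move (DG n) i (uvec n) = uvec n := by
  apply fix_of_nsum hn
  intro i
  have hlt := i.isLt
  unfold nsum
  by_cases h0 : i.val = 0
  · rw [if_pos h0, av_uvec, if_neg (by omega)]
  · rw [if_neg h0]
    by_cases h1 : i.val + 4 ≤ n
    · rw [if_pos h1, av_uvec, av_uvec]
      have hiff : ((i.val-1 = n-2 ∨ ((i.val-1) % 2 = 0 ∧ i.val-1 ≤ n-4)) ∧ i.val-1 < n)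
          ↔ ((i.val+1 = n-2 ∨ ((i.val+1) % 2 = 0 ∧ i.val+1 ≤ n-4)) ∧ i.val+1 < n) := by
        omega
      by_cases hc : (i.val-1 = n-2 ∨ ((i.val-1) % 2 = 0 ∧ i.val-1 ≤ n-4)) ∧ i.val-1 < n
      · rw [if_pos hc, if_pos (hiff.mp hc)]; exact z2self _
      · rw [if_neg hc, if_neg (fun h => hc (hiff.mpr h))]; exact z2self _
    · rw [if_neg h1]
      by_cases h2 : i.val + 3 = n
      · rw [if_pos h2, av_uvec, av_uvec, av_uvec, if_pos ⟨by omega, by omega⟩,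
          if_pos ⟨by omega, by omega⟩, if_neg (by omega)]
        decide
      · rw [if_neg h2, av_uvec, if_neg (by omega)]

lemma yv_uvec {n : ℕ} (hn : 4 ≤ n) (hev : n % 2 = 0) (m : ℕ) (hm : m < n) :
    yv n (uvec n) m = 1 := by
  by_cases h0 : m = 0
  · subst h0; rw [yv_zero, av_uvec, if_pos ⟨by omega, by omega⟩]
  · rcases Nat.lt_or_ge m (n-2) with h1 | h1
    · rw [yv_mid _ (by omega) (by omega), av_uvec, av_uvec]
      by_cases hpar : m % 2 = 0
      · rw [if_neg (by omega), if_pos ⟨by omega, by omega⟩, zero_add]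
      · rw [if_pos ⟨by omega, by omega⟩, if_neg (by omega), add_zero]
    · rcases Nat.lt_or_ge m (n-1) with h2 | h2
      · rw [show m = n-2 by omega, yv_fork1 hn, av_uvec, av_uvec, av_uvec,
          if_neg (by omega), if_pos ⟨by omega, by omega⟩, if_neg (by omega)]
        decide
      · rw [show m = n-1 by omega, yv_fork2 hn, av_uvec, av_uvec,
          if_pos ⟨by omega, by omega⟩, if_neg (by omega)]
        decide

lemma wgt_uvec {n : ℕ} (hn : 4 ≤ n) (hev : n % 2 = 0) : wgt n (uvec n) = n := by
  unfold wgt vwgt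
  rw [Finset.filter_true_of_mem (fun m hm => yv_uvec hn hev m (Finset.mem_range.mp hm)),
    Finset.card_range]

def PHI (n : ℕ) (a : Fin n → ZMod 2) : ℕ :=
  if a = Lvec n then 1 else if n % 2 = 0 ∧ a = uvec n then n+1 else wgt n a

lemma wgt_le {n : ℕ} (a : Fin n → ZMod 2) : wgt n a ≤ n := vwgt_le _

lemma av_z0 {n : ℕ} (m : ℕ) : av (fun _ : Fin n => (0 : ZMod 2)) m = 0 := by
  unfold av; split <;> rfl

lemma yv_z0 {n : ℕ} (hn : 4 ≤ n) (m : ℕ) : yv n (fun _ => 0) m = 0 := by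
  by_cases h0 : m = 0
  · subst h0; rw [yv_zero, av_z0]
  · rcases Nat.lt_or_ge m (n-2) with h1 | h1
    · rw [yv_mid _ (by omega) (by omega), av_z0, av_z0, add_zero]
    · rcases Nat.lt_or_ge m (n-1) with h2 | h2
      · rw [show m = n-2 by omega, yv_fork1 hn, av_z0, av_z0, av_z0]; decide
      · rcases Nat.lt_or_ge m n with h3 | h3
        · rw [show m = n-1 by omega, yv_fork2 hn, av_z0, av_z0, add_zero]
        · exact yv_top hn _ h3

lemma wgt_of_yv_eq {n : ℕ} {a : Fin n → ZMod 2} {v : ℕ → ZMod 2}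
    (h : ∀ m, yv n a m = v m) : wgt n a = vwgt n v := by
  unfold wgt vwgt
  congr 1
  apply Finset.filter_congr
  intro m _
  rw [h m]

lemma wgt_z0 {n : ℕ} (hn : 4 ≤ n) : wgt n (fun _ => 0) = 0 := by
  unfold wgt vwgt
  rw [Finset.card_eq_zero, Finset.filter_eq_empty_iff]
  intro m _
  rw [yv_z0 hn]
  exact fun h => one_ne_zero h.symm

lemma z0_fixed {n : ℕ} (hn : 4 ≤ n) : ∀ i, move (DG n) i (fun _ => 0) = (fun _ => 0) := by
  apply fix_of_nsum hn
  intro i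
  unfold nsum
  split_ifs <;> simp [av_z0]

lemma all_zero_of_wgt0 {n : ℕ} (hn : 4 ≤ n) {a : Fin n → ZMod 2} (hw : wgt n a = 0) :
    ∀ m, yv n a m = 0 := by
  intro m
  by_cases hm : m < n
  · have hemp : (Finset.range n).filter (fun m => yv n a m = 1) = ∅ :=
      Finset.card_eq_zero.mp hw
    apply z2ne
    intro h
    have : m ∈ (Finset.range n).filter (fun m => yv n a m = 1) :=
      Finset.mem_filter.mpr ⟨Finset.mem_range.mpr hm, h⟩
    rw [hemp] at this
    exact absurd this (Finset.notMem_empty m)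
  · exact yv_top hn a (by omega)

lemma all_one_of_wgtn {n : ℕ} {a : Fin n → ZMod 2} (hw : wgt n a = n) :
    ∀ m, m < n → yv n a m = 1 := by
  intro m hm
  have heq : (Finset.range n).filter (fun m => yv n a m = 1) = Finset.range n := by
    apply Finset.eq_of_subset_of_card_le (Finset.filter_subset _ _)
    have hcard : ((Finset.range n).filter (fun m => yv n a m = 1)).card = n := hw
    rw [Finset.card_range, hcard]
  have : m ∈ (Finset.range n).filter (fun m => yv n a m = 1) := by
    rw [heq]; exact Finset.mem_range.mpr hm
  exact (Finset.mem_filter.mp this).2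

lemma phi_of_rel {n : ℕ} (hn : 4 ≤ n) {a b : Fin n → ZMod 2} (h : RL n a b) :
    PHI n a = PHI n b := by
  unfold PHI
  by_cases ha : a = Lvec n
  · have hb : b = Lvec n := (fixed_rel (Lvec_fixed hn) b (ha ▸ h)).symm
    rw [if_pos ha, if_pos hb]
  · have hb : ¬ b = Lvec n := fun hbL =>
      ha (fixed_rel (Lvec_fixed hn) a (hbL ▸ h.symm)).symm
    rw [if_neg ha, if_neg hb]
    by_cases ha2 : n % 2 = 0 ∧ a = uvec n
    · have hb2 : b = uvec n := (fixed_rel (uvec_fixed hn ha2.1) b (ha2.2 ▸ h)).symm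
      rw [if_pos ha2, if_pos ⟨ha2.1, hb2⟩]
    · have hb2 : ¬(n % 2 = 0 ∧ b = uvec n) := fun hb2 =>
        ha2 ⟨hb2.1, (fixed_rel (uvec_fixed hn hb2.1) a (hb2.2 ▸ h.symm)).symm⟩
      rw [if_neg ha2, if_neg hb2]
      exact wgt_rel hn h

lemma rel_of_phi {n : ℕ} (hn : 4 ≤ n) {a b : Fin n → ZMod 2} (hP : PHI n a = PHI n b) :
    RL n a b := by
  unfold PHI at hP
  by_cases ha : a = Lvec n
  · by_cases hb : b = Lvec n
    · rw [ha, hb]; exact rfl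
    · exfalso
      rw [if_pos ha, if_neg hb] at hP
      by_cases hb2 : n % 2 = 0 ∧ b = uvec n
      · rw [if_pos hb2] at hP; omega
      · rw [if_neg hb2] at hP
        have := wgt_even hn b
        omega
  · by_cases hb : b = Lvec n
    · exfalso
      rw [if_neg ha, if_pos hb] at hP
      by_cases ha2 : n % 2 = 0 ∧ a = uvec n
      · rw [if_pos ha2] at hP; omega
      · rw [if_neg ha2] at hP
        have := wgt_even hn a
        omega
    · rw [if_neg ha, if_neg hb] at hP
      by_cases ha2 : n % 2 = 0 ∧ a = uvec n
      · by_cases hb2 : n % 2 = 0 ∧ b = uvec n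
        · rw [ha2.2, hb2.2]; exact rfl
        · exfalso
          rw [if_pos ha2, if_neg hb2] at hP
          have := wgt_even hn b
          have := wgt_le b
          omega
      · by_cases hb2 : n % 2 = 0 ∧ b = uvec n
        · exfalso
          rw [if_neg ha2, if_pos hb2] at hP
          have := wgt_even hn a
          have := wgt_le a
          omega
        · rw [if_neg ha2, if_neg hb2] at hP
          -- hP : wgt n a = wgt n b
          have hle := wgt_le a
          rcases Nat.eq_zero_or_pos (wgt n a) with hw0 | hwpos
          · -- weight 0
            have haz := yv_ker hn a (all_zero_of_wgt0 hn hw0)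
            have hbz := yv_ker hn b (all_zero_of_wgt0 hn (hP ▸ hw0))
            rcases haz with haz | haz
            · rcases hbz with hbz | hbz
              · rw [haz, hbz]; exact rfl
              · exact absurd hbz hb
            · exact absurd haz ha
          · rcases Nat.lt_or_ge (wgt n a) n with hwn | hwn
            · exact rel_of_wgt_mid hn a b hP hwpos hwn
            · -- weight n
              have hwn' : wgt n a = n := by omega
              have hev : n % 2 = 0 := by have := wgt_even hn a; omega
              have hau : a = uvec n ∨ a = uvec n + Lvec n := by
                apply yv_inj2 hn
                intro m
                by_cases hm : m < n
                · rw [all_one_of_wgtn hwn' m hm, yv_uvec hn hev m hm]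
                · rw [yv_top hn _ (by omega), yv_top hn _ (by omega)]
              have hbu : b = uvec n ∨ b = uvec n + Lvec n := by
                apply yv_inj2 hn
                intro m
                by_cases hm : m < n
                · rw [all_one_of_wgtn (hP ▸ hwn') m hm, yv_uvec hn hev m hm]
                · rw [yv_top hn _ (by omega), yv_top hn _ (by omega)]
              rcases hau with hau | hau
              · exact absurd ⟨hev, hau⟩ ha2
              · rcases hbu with hbu | hbu
                · exact absurd ⟨hev, hbu⟩ hb2
                · rw [hau, hbu]; exact rfl

lemma z2step : ∀ x : ZMod 2, x + 1 ≠ x := by decide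

lemma z0_ne_Lvec {n : ℕ} (hn : 4 ≤ n) : (fun _ : Fin n => (0:ZMod 2)) ≠ Lvec n := by
  intro h
  have := congrFun h ⟨n-1, by omega⟩
  unfold Lvec at this
  rw [if_pos (by simp; omega)] at this
  exact zero_ne_one this

lemma z0_ne_uvec {n : ℕ} (hn : 4 ≤ n) : (fun _ : Fin n => (0:ZMod 2)) ≠ uvec n := by
  intro h
  have := congrFun h ⟨0, by omega⟩
  unfold uvec at this
  rw [if_pos (by right; constructor <;> simp <;> omega)] at this
  exact zero_ne_one this

lemma uvec_ne_Lvec {n : ℕ} (hn : 4 ≤ n) : uvec n ≠ Lvec n := by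
  intro h
  have := congrFun h ⟨0, by omega⟩
  unfold uvec Lvec at this
  rw [if_pos (by right; constructor <;> simp <;> omega), if_neg (by simp; omega)] at this
  exact one_ne_zero this

lemma uL_ne_Lvec {n : ℕ} (hn : 4 ≤ n) : uvec n + Lvec n ≠ Lvec n := by
  intro h
  have := congrFun h ⟨0, by omega⟩
  have h2 : uvec n ⟨0, by omega⟩ + Lvec n ⟨0, by omega⟩ = Lvec n ⟨0, by omega⟩ := this
  unfold uvec Lvec at h2
  rw [if_pos (by right; constructor <;> simp <;> omega), if_neg (by simp; omega)] at h2
  norm_num at h2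

lemma uL_ne_uvec {n : ℕ} (hn : 4 ≤ n) : uvec n + Lvec n ≠ uvec n := by
  intro h
  have h2 : uvec n ⟨n-1, by omega⟩ + Lvec n ⟨n-1, by omega⟩ = uvec n ⟨n-1, by omega⟩ :=
    congrFun h ⟨n-1, by omega⟩
  have hL : Lvec n ⟨n-1, by omega⟩ = 1 := by
    unfold Lvec; rw [if_pos (by simp; omega)]
  rw [hL] at h2
  exact z2step _ h2

lemma wgt_uL {n : ℕ} (hn : 4 ≤ n) (hev : n % 2 = 0) : wgt n (uvec n + Lvec n) = n := by
  have h : ∀ m, yv n (uvec n + Lvec n) m = yv n (uvec n) m := by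
    intro m
    rw [yv_add, yv_Lvec hn, add_zero]
  rw [wgt_of_yv_eq h]
  exact wgt_uvec hn hev

lemma exists_wgt {n : ℕ} (hn : 4 ≤ n) {w : ℕ} (hw0 : 0 < w) (hwn : w < n) (hwe : w % 2 = 0) :
    ∃ a : Fin n → ZMod 2, wgt n a = w := by
  set vs : ℕ → ZMod 2 := fun m => if n-1-w ≤ m ∧ m < n-1 then 1 else 0 with hvs
  have hfil : (Finset.range n).filter (fun m => vs m = 1) = Finset.Ico (n-1-w) (n-1) := by
    ext m
    rw [Finset.mem_filter, Finset.mem_range, Finset.mem_Ico]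
    constructor
    · rintro ⟨hm, h2⟩
      have h2' : (if n-1-w ≤ m ∧ m < n-1 then (1:ZMod 2) else 0) = 1 := h2
      by_cases hcond : n-1-w ≤ m ∧ m < n-1
      · exact hcond
      · rw [if_neg hcond] at h2'
        exact absurd h2'.symm one_ne_zero
    · rintro ⟨hA, hB⟩
      refine ⟨by omega, ?_⟩
      show (if n-1-w ≤ m ∧ m < n-1 then (1:ZMod 2) else 0) = 1
      rw [if_pos ⟨hA, hB⟩]
  have hz : zeroOff n vs := by
    intro m hm
    show (if n-1-w ≤ m ∧ m < n-1 then (1:ZMod 2) else 0) = 0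
    rw [if_neg (by omega)]
  have hsum : ∑ m ∈ Finset.range n, vs m = 0 := by
    rw [sum_eq_card, hfil, Nat.card_Ico]
    exact (ZMod.natCast_eq_zero_iff _ 2).mpr (by omega)
  obtain ⟨a, hva⟩ := realize hn vs hz hsum
  refine ⟨a, ?_⟩
  rw [wgt_of_yv_eq hva]
  unfold vwgt
  rw [hfil, Nat.card_Ico]
  omega

def TS (n : ℕ) : Finset ℕ :=
  (insert 1 ((Finset.range (n/2+1)).image (fun j => 2*j))) ∪
    (if n % 2 = 0 then {n+1} else ∅)

lemma mem_TS {n : ℕ} (hn : 4 ≤ n) (a : Fin n → ZMod 2) : PHI n a ∈ TS n := by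
  unfold PHI TS
  by_cases ha : a = Lvec n
  · rw [if_pos ha]
    exact Finset.mem_union_left _ (Finset.mem_insert_self _ _)
  · rw [if_neg ha]
    by_cases ha2 : n % 2 = 0 ∧ a = uvec n
    · rw [if_pos ha2]
      apply Finset.mem_union_right
      rw [if_pos ha2.1]
      exact Finset.mem_singleton_self _
    · rw [if_neg ha2]
      apply Finset.mem_union_left
      apply Finset.mem_insert_of_mem
      have h1 := wgt_even hn a
      have h2 := wgt_le a
      exact Finset.mem_image.mpr ⟨wgt n a / 2, Finset.mem_range.mpr (by omega), by omega⟩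

lemma surj_TS {n : ℕ} (hn : 4 ≤ n) (x : ℕ) (hx : x ∈ TS n) :
    ∃ a : Fin n → ZMod 2, PHI n a = x := by
  unfold TS at hx
  rcases Finset.mem_union.mp hx with hx | hx
  · rcases Finset.mem_insert.mp hx with hx | hx
    · -- x = 1
      refine ⟨Lvec n, ?_⟩
      unfold PHI
      rw [if_pos rfl, hx]
    · obtain ⟨j, hj, rfl⟩ := Finset.mem_image.mp hx
      rw [Finset.mem_range] at hj
      by_cases hj0 : j = 0
      · subst hj0
        refine ⟨fun _ => 0, ?_⟩
        unfold PHI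
        rw [if_neg (z0_ne_Lvec hn), if_neg (fun h => z0_ne_uvec hn h.2), wgt_z0 hn]
      · by_cases hjn : 2*j = n
        · have hev : n % 2 = 0 := by omega
          refine ⟨uvec n + Lvec n, ?_⟩
          unfold PHI
          rw [if_neg (uL_ne_Lvec hn), if_neg (fun h => uL_ne_uvec hn h.2), wgt_uL hn hev, hjn]
        · have hlt : 2*j < n := by omega
          obtain ⟨a, hwa⟩ := exists_wgt hn (w := 2*j) (by omega) hlt (by omega)
          refine ⟨a, ?_⟩
          unfold PHI
          rw [if_neg (fun h => by rw [h, wgt_Lvec hn] at hwa; omega),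
            if_neg (fun h => by rw [h.2, wgt_uvec hn h.1] at hwa; omega), hwa]
  · by_cases hev : n % 2 = 0
    · rw [if_pos hev, Finset.mem_singleton] at hx
      refine ⟨uvec n, ?_⟩
      unfold PHI
      rw [if_neg (uvec_ne_Lvec hn), if_pos ⟨hev, rfl⟩, hx]
    · rw [if_neg hev] at hx
      exact absurd hx (Finset.notMem_empty x)

lemma card_TS {n : ℕ} (hn : 4 ≤ n) :
    (TS n).card = n/2 + 2 + (if n % 2 = 0 then 1 else 0) := by
  unfold TS
  have himg : ((Finset.range (n/2+1)).image (fun j => 2*j)).card = n/2+1 := by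
    rw [Finset.card_image_of_injective _ (fun a b h => by omega), Finset.card_range]
  have h1 : (1:ℕ) ∉ (Finset.range (n/2+1)).image (fun j => 2*j) := by
    intro h
    obtain ⟨j, _, hj⟩ := Finset.mem_image.mp h
    omega
  have hins : (insert 1 ((Finset.range (n/2+1)).image (fun j => 2*j))).card = n/2+2 := by
    rw [Finset.card_insert_of_notMem h1, himg]
  by_cases hev : n % 2 = 0
  · rw [if_pos hev, if_pos hev]
    rw [Finset.card_union_of_disjoint, hins, Finset.card_singleton]
    rw [Finset.disjoint_singleton_right]
    intro h
    rcases Finset.mem_insert.mp h with h | h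
    · omega
    · obtain ⟨j, _, hj⟩ := Finset.mem_image.mp h
      omega
  · rw [if_neg hev, if_neg hev, Finset.union_empty, hins]

lemma quot_card {n : ℕ} (hn : 4 ≤ n) :
    Nat.card (Quot (reederStep (DG n))) = n/2 + 2 + (if n % 2 = 0 then 1 else 0) := by
  rw [← card_TS hn]
  have hf : ∀ (a b : Fin n → ZMod 2), reederStep (DG n) a b →
      (⟨PHI n a, mem_TS hn a⟩ : {x // x ∈ TS n}) = ⟨PHI n b, mem_TS hn b⟩ := by
    intro a b hab
    exact Subtype.ext (phi_of_rel hn (Quot.sound hab))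
  have hbij : Function.Bijective
      (Quot.lift (fun a => (⟨PHI n a, mem_TS hn a⟩ : {x // x ∈ TS n})) hf) := by
    constructor
    · intro qa qb
      induction qa using Quot.ind with | _ a =>
      induction qb using Quot.ind with | _ b =>
      intro h
      exact rel_of_phi hn (congrArg Subtype.val h)
    · rintro ⟨x, hx⟩
      obtain ⟨a, ha⟩ := surj_TS hn x hx
      exact ⟨Quot.mk _ a, Subtype.ext ha⟩
  rw [Nat.card_congr (Equiv.ofBijective _ hbij)]
  exact Nat.card_eq_finsetCard _

/-- The number of equivalence classes of labelings of `D_n` (`n ≥ 4`) under Reeder's moves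
equals `k+3` if `n = 2k` and `k+2` if `n = 2k+1`. -/
theorem Dn_card_classes (n : ℕ) (hn : 4 ≤ n) :
    (∀ k : ℕ, n = 2 * k → Nat.card (Quot (reederStep (DG n))) = k + 3) ∧
    (∀ k : ℕ, n = 2 * k + 1 → Nat.card (Quot (reederStep (DG n))) = k + 2) := by
  constructor
  · intro k hk
    rw [quot_card hn, if_pos (by omega)]
    omega
  · intro k hk
    rw [quot_card hn, if_neg (by omega)]
    omega
end

section
/- For D_n (n ≥ 4), every labeling that is not a fixed labeling is equivalent to a labeling whose values at both leaf vertices n-1 and n are 0. -/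
/-- Equivalence of labelings: a finite sequence of moves. -/
def reederEquiv {V : Type} [Fintype V] [DecidableEq V] (D : SimpleGraph V)
    [DecidableRel D.Adj] : (V → ZMod 2) → (V → ZMod 2) → Prop :=
  Relation.ReflTransGen (reederStep D)

open Function

section General

variable {V : Type} [Fintype V] [DecidableEq V] {D : SimpleGraph V} [DecidableRel D.Adj]

lemma ZMod.two_eq_zero_or_eq_one (x : ZMod 2) : x = 0 ∨ x = 1 := by
  revert x
  decide

def neighborSum (D : SimpleGraph V) [DecidableRel D.Adj] (a : V → ZMod 2) (i : V) : ZMod 2 :=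
  ∑ k ∈ D.neighborFinset i, a k

lemma move_eq_update (i : V) (a : V → ZMod 2) :
    move D i a = update a i (a i + neighborSum D a i) := by
  funext j
  simp only [move, neighborSum, update_apply]

lemma move_eq_self_iff {i : V} {a : V → ZMod 2} : move D i a = a ↔ neighborSum D a i = 0 := by
  rw [move_eq_update, update_eq_self_iff, add_eq_left]

lemma neighborSum_move_of_adj {i j : V} (a : V → ZMod 2) (h : D.Adj i j) :
    neighborSum D (move D i a) j = neighborSum D a j + neighborSum D a i := by
  have hi : i ∈ D.neighborFinset j := by simpa using h.symm
  rw [move_eq_update]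
  unfold neighborSum
  rw [Finset.sum_update_of_mem hi, Finset.sum_eq_add_sum_sdiff_singleton_of_mem hi a]
  ring

lemma reederEquiv_move (i : V) (a : V → ZMod 2) : reederEquiv D a (move D i a) :=
  Relation.ReflTransGen.single ⟨i, rfl⟩

lemma reederEquiv_update {v : V} {a : V → ZMod 2} (h : neighborSum D a v = 1) (x : ZMod 2) :
    reederEquiv D a (update a v x) := by
  obtain rfl | rfl : x = a v ∨ x = a v + 1 := by
    generalize a v = y
    revert x y
    decide
  · rw [update_eq_self]
    exact Relation.ReflTransGen.refl
  · rw [← h, ← move_eq_update]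
    exact reederEquiv_move v a

lemma SimpleGraph.Adj.exists_reederEquiv_neighborSum_eq_one {i j : V} (hij : D.Adj i j)
    {a : V → ZMod 2} (ha : neighborSum D a i = 1) :
    ∃ b, reederEquiv D a b ∧ neighborSum D b j = 1 := by
  rcases ZMod.two_eq_zero_or_eq_one (neighborSum D a j) with hj | hj
  · refine ⟨move D i a, reederEquiv_move i a, ?_⟩
    rw [neighborSum_move_of_adj a hij, hj, ha, zero_add]
  · exact ⟨a, Relation.ReflTransGen.refl, hj⟩

lemma SimpleGraph.Reachable.exists_reederEquiv_neighborSum_eq_one {i j : V}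
    (hij : D.Reachable i j) {a : V → ZMod 2} (ha : neighborSum D a i = 1) :
    ∃ b, reederEquiv D a b ∧ neighborSum D b j = 1 := by
  obtain ⟨p⟩ := hij
  induction p generalizing a with
  | nil => exact ⟨a, Relation.ReflTransGen.refl, ha⟩
  | cons hadj _ ih =>
    obtain ⟨b, hab, hb⟩ := hadj.exists_reederEquiv_neighborSum_eq_one ha
    obtain ⟨c, hbc, hc⟩ := ih hb
    exact ⟨c, hab.trans hbc, hc⟩

lemma SimpleGraph.Connected.exists_reederEquiv_apply_eq_one (hD : D.Connected)
    {a : V → ZMod 2} (ha : ¬ ∀ i, move D i a = a) (v : V) :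
    ∃ b, reederEquiv D a b ∧ b v = 1 := by
  push Not at ha
  obtain ⟨i, hi⟩ := ha
  have hi1 : neighborSum D a i = 1 :=
    (ZMod.two_eq_zero_or_eq_one _).resolve_left (mt move_eq_self_iff.mpr hi)
  obtain ⟨b, hab, hb⟩ := (hD.preconnected i v).exists_reederEquiv_neighborSum_eq_one hi1
  exact ⟨update b v 1, hab.trans (reederEquiv_update hb 1), update_self v 1 b⟩

end General

section Dn

variable {n : ℕ}

lemma DG_adj {i j : Fin n} : (DG n).Adj i j ↔ i ≠ j ∧
    (((i.val + 1 = j.val ∧ j.val + 3 ≤ n) ∨ (j.val + 1 = i.val ∧ i.val + 3 ≤ n)) ∨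
     (i.val + 3 = n ∧ (j.val + 2 = n ∨ j.val + 1 = n)) ∨
     (j.val + 3 = n ∧ (i.val + 2 = n ∨ i.val + 1 = n))) := Iff.rfl

lemma DG_neighborFinset_of_leaf (hn : 3 ≤ n) {j : Fin n} (hj : j.val + 1 = n ∨ j.val + 2 = n) :
    (DG n).neighborFinset j = {⟨n - 3, by omega⟩} := by
  ext x
  simp only [SimpleGraph.mem_neighborFinset, DG_adj, Finset.mem_singleton, Fin.ext_iff, ne_eq]
  omega

lemma DG_connected (hn : 3 ≤ n) : (DG n).Connected := by
  have hpath : ∀ k (hk : k + 3 ≤ n), (DG n).Reachable ⟨0, by omega⟩ ⟨k, by omega⟩ := by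
    intro k
    induction k with
    | zero => exact fun _ => SimpleGraph.Reachable.refl _
    | succ k ih =>
      intro hk
      refine (ih (by omega)).trans (SimpleGraph.Adj.reachable ?_)
      simp only [DG_adj, ne_eq, Fin.ext_iff, true_and]
      omega
  have : Nonempty (Fin n) := ⟨⟨0, by omega⟩⟩
  refine SimpleGraph.Connected.mk fun u v => ?_
  suffices h : ∀ w : Fin n, (DG n).Reachable ⟨0, by omega⟩ w from (h u).symm.trans (h v)
  intro w
  by_cases hw : w.val + 3 ≤ n
  · exact hpath w hw
  · refine (hpath (n - 3) (by omega)).trans (SimpleGraph.Adj.reachable ?_)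
    simp only [DG_adj, ne_eq, Fin.ext_iff]
    omega

lemma DG_exists_reederEquiv_leaves_eq_zero (hn : 3 ≤ n) {b : Fin n → ZMod 2}
    (hb : b ⟨n - 3, by omega⟩ = 1) :
    ∃ c, reederEquiv (DG n) b c ∧
      ∀ j : Fin n, (j.val + 1 = n ∨ j.val + 2 = n) → c j = 0 := by
  let ℓ₁ : Fin n := ⟨n - 2, by omega⟩
  let ℓ₂ : Fin n := ⟨n - 1, by omega⟩
  have hne : ℓ₁ ≠ ⟨n - 3, by omega⟩ ∧ ℓ₂ ≠ ℓ₁ := by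
    simp only [ℓ₁, ℓ₂, ne_eq, Fin.ext_iff]; omega
  have h₁ : neighborSum (DG n) b ℓ₁ = 1 := by
    rw [neighborSum, DG_neighborFinset_of_leaf hn (by dsimp [ℓ₁]; omega), Finset.sum_singleton,
      hb]
  have h₂ : neighborSum (DG n) (update b ℓ₁ 0) ℓ₂ = 1 := by
    rw [neighborSum, DG_neighborFinset_of_leaf hn (by dsimp [ℓ₂]; omega), Finset.sum_singleton,
      update_of_ne hne.1.symm, hb]
  refine ⟨update (update b ℓ₁ 0) ℓ₂ 0,
    (reederEquiv_update h₁ 0).trans (reederEquiv_update h₂ 0), fun j hj => ?_⟩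
  obtain rfl | rfl : j = ℓ₂ ∨ j = ℓ₁ := by simp only [ℓ₁, ℓ₂, Fin.ext_iff]; omega
  · exact update_self _ _ _
  · rw [update_of_ne hne.2.symm, update_self]

end Dn

/-- For `D_n` (`n ≥ 4`), every labeling that is not a fixed labeling is equivalent to a
labeling whose values at both leaf vertices are 0. -/
theorem Dn_reduce_leaves (n : ℕ) (hn : 4 ≤ n) (a : Fin n → ZMod 2)
    (ha : ¬ ∀ i : Fin n, move (DG n) i a = a) :
    ∃ b : Fin n → ZMod 2, reederEquiv (DG n) a b ∧
      ∀ j : Fin n, (j.val + 1 = n ∨ j.val + 2 = n) → b j = 0 := by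
  obtain ⟨b, hab, hb⟩ :=
    (DG_connected (by omega)).exists_reederEquiv_apply_eq_one ha ⟨n - 3, by omega⟩
  obtain ⟨c, hbc, hc⟩ := DG_exists_reederEquiv_leaves_eq_zero (by omega) hb
  exact ⟨c, hab.trans hbc, hc⟩
end
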